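/- Let h : ℝ → ℝ be four times continuously differentiable in a neighborhood of x ∈ ℝ with h(x) ≠ 0, and set s = −(1/3)·h''(x)/h(x). Then the approximate-coefficient MQ-RBF reconstruction is fourth-order accurate: (1/2 + (1/4)·s·Δx²)·(h̄₀ + h̄₊) = h(x) + O(Δx⁴); i.e., there exist C, Δx₀ > 0 such that |(1/2 + (1/4)sΔx²)(h̄₀ + h̄₊) − h(x)| ≤ C·Δx⁴ for all 0 < Δx < Δx₀. -/

import Mathlib

open Set

lemma iterEqOpen (f : ℝ → ℝ) {u : Set ℝ} (hu : IsOpen u) (k : ℕ) :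
    ∀ y ∈ u, iteratedDerivWithin k f u y = iteratedDeriv k f y := by
  induction k with
  | zero => intro y hy; simp [iteratedDerivWithin_zero]
  | succ k ih =>
    intro y hy
    rw [iteratedDerivWithin_succ,
      derivWithin_congr (fun z hz => ih z hz) (ih y hy),
      derivWithin_of_isOpen hu hy, ← iteratedDeriv_succ]

lemma iterEq (f : ℝ → ℝ) {u s : Set ℝ} (hu : IsOpen u) (hf : ContDiffOn ℝ 4 f u)
    (hsu : s ⊆ u) (hs : UniqueDiffOn ℝ s) :
    ∀ k < 4, ∀ y ∈ s, iteratedDerivWithin k f s y = iteratedDeriv k f y := by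
  intro k
  induction k with
  | zero => intro _ y hy; simp [iteratedDerivWithin_zero]
  | succ k ih =>
    intro hk y hy
    have hk' : k < 4 := Nat.lt_of_succ_lt hk
    have hdo : DifferentiableOn ℝ (iteratedDeriv k f) u := by
      refine (hf.differentiableOn_iteratedDerivWithin ?_ hu.uniqueDiffOn).congr
        (fun z hz => (iterEqOpen f hu k z hz).symm)
      exact_mod_cast hk'
    have hda : DifferentiableAt ℝ (iteratedDeriv k f) y :=
      hdo.differentiableAt (hu.mem_nhds (hsu hy))
    rw [iteratedDerivWithin_succ,
      derivWithin_congr (fun z hz => ih hk' z hz) (ih hk' y hy),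
      hda.derivWithin (hs y hy), ← iteratedDeriv_succ]

lemma iterReflect (f : ℝ → ℝ) (x : ℝ) (k : ℕ) :
    iteratedDeriv k (fun t => f (2*x - t)) x = (-1)^k * iteratedDeriv k f x := by
  have h1 : (fun t : ℝ => f (2*x - t)) = fun t => f (2*x + -t) := by
    funext t; rw [sub_eq_add_neg]
  have h2 := iteratedDeriv_comp_neg k (fun u => f (2*x+u)) x
  have h3 := congrFun (iteratedDeriv_comp_const_add k f (2*x)) (-x)
  rw [h1, h2, h3, smul_eq_mul]
  ring_nf

lemma taylorBound (h : ℝ → ℝ) (x : ℝ) (hh : ContDiffAt ℝ 4 h x) :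
    ∃ C ≥ 0, ∃ r > 0, ContDiffOn ℝ 4 h (Icc (x-r) (x+r)) ∧
      ∀ ξ ∈ Icc (x-r) (x+r),
        |h ξ - (h x + iteratedDeriv 1 h x * (ξ-x) + iteratedDeriv 2 h x / 2 * (ξ-x)^2
            + iteratedDeriv 3 h x / 6 * (ξ-x)^3)| ≤ C * |ξ-x|^4 := by
  obtain ⟨u, hu_nhds, hcd⟩ := hh.contDiffOn le_rfl (by simp)
  obtain ⟨u', hsub', hopen, hxu'⟩ := mem_nhds_iff.mp hu_nhds
  obtain ⟨ε, hε, hball⟩ := Metric.isOpen_iff.mp hopen x hxu'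
  set r := ε/2 with hr_def
  have hr : 0 < r := by positivity
  have hIcc_sub : Icc (x-r) (x+r) ⊆ u' := by
    rw [← Real.closedBall_eq_Icc]
    exact (Metric.closedBall_subset_ball (by linarith)).trans hball
  have hcd' : ContDiffOn ℝ 4 h u' := hcd.mono hsub'
  have hxr : x < x + r := by linarith
  have hxl : x - r < x := by linarith
  have hIccR : Icc x (x+r) ⊆ u' := fun z hz => hIcc_sub ⟨by linarith [hz.1], hz.2⟩
  -- right side Taylor
  obtain ⟨C₁, hC₁⟩ := exists_taylor_mean_remainder_bound (n := 3) hxr.le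
    (hcd'.mono hIccR)
  -- reflected function
  set g : ℝ → ℝ := fun t => h (2*x - t) with hg_def
  set v : Set ℝ := (fun t : ℝ => 2*x - t) ⁻¹' u' with hv_def
  have hvopen : IsOpen v := hopen.preimage (by continuity)
  have hgv : ContDiffOn ℝ 4 g v :=
    hcd'.comp ((contDiff_const.sub contDiff_id).contDiffOn) (fun t ht => ht)
  have hIccRv : Icc x (x+r) ⊆ v := by
    intro t ht
    have : 2*x - t ∈ Icc (x-r) (x+r) := ⟨by linarith [ht.2], by linarith [ht.1]⟩
    exact hIcc_sub this
  obtain ⟨C₂, hC₂⟩ := exists_taylor_mean_remainder_bound (n := 3) hxr.le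
    (hgv.mono hIccRv)
  -- identify Taylor coefficients
  have hud : UniqueDiffOn ℝ (Icc x (x+r)) := uniqueDiffOn_Icc hxr
  have hxmem : x ∈ Icc x (x+r) := ⟨le_rfl, hxr.le⟩
  have hTh : ∀ ξ, taylorWithinEval h 3 (Icc x (x+r)) x ξ
      = h x + iteratedDeriv 1 h x * (ξ-x) + iteratedDeriv 2 h x / 2 * (ξ-x)^2
        + iteratedDeriv 3 h x / 6 * (ξ-x)^3 := by
    intro ξ
    rw [taylor_within_apply]
    have e0 := iterEq h hopen hcd' hIccR hud 0 (by norm_num) x hxmem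
    have e1 := iterEq h hopen hcd' hIccR hud 1 (by norm_num) x hxmem
    have e2 := iterEq h hopen hcd' hIccR hud 2 (by norm_num) x hxmem
    have e3 := iterEq h hopen hcd' hIccR hud 3 (by norm_num) x hxmem
    simp [Finset.sum_range_succ, e0, e1, e2, e3, Nat.factorial, iteratedDeriv_zero]
    ring
  have hTg : ∀ ξ, taylorWithinEval g 3 (Icc x (x+r)) x ξ
      = h x - iteratedDeriv 1 h x * (ξ-x) + iteratedDeriv 2 h x / 2 * (ξ-x)^2
        - iteratedDeriv 3 h x / 6 * (ξ-x)^3 := by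
    intro ξ
    rw [taylor_within_apply]
    have e0 := iterEq g hvopen hgv hIccRv hud 0 (by norm_num) x hxmem
    have e1 := iterEq g hvopen hgv hIccRv hud 1 (by norm_num) x hxmem
    have e2 := iterEq g hvopen hgv hIccRv hud 2 (by norm_num) x hxmem
    have e3 := iterEq g hvopen hgv hIccRv hud 3 (by norm_num) x hxmem
    have r0 := iterReflect h x 0
    have r1 := iterReflect h x 1
    have r2 := iterReflect h x 2
    have r3 := iterReflect h x 3
    rw [hg_def] at e0 e1 e2 e3 ⊢
    simp [Finset.sum_range_succ, e0, e1, e2, e3, r0, r1, r2, r3, Nat.factorial,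
      iteratedDeriv_zero]
    ring
  refine ⟨max (max C₁ C₂) 0, le_max_right _ _, r, hr, hcd'.mono hIcc_sub, ?_⟩
  intro ξ hξ
  set P := h x + iteratedDeriv 1 h x * (ξ-x) + iteratedDeriv 2 h x / 2 * (ξ-x)^2
    + iteratedDeriv 3 h x / 6 * (ξ-x)^3 with hP_def
  rcases le_or_gt x ξ with hcase | hcase
  · have hmem : ξ ∈ Icc x (x+r) := ⟨hcase, hξ.2⟩
    have := hC₁ ξ hmem
    rw [hTh ξ] at this
    calc |h ξ - P| ≤ C₁ * (ξ - x)^4 := by simpa only [Real.norm_eq_abs] using this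
      _ ≤ max (max C₁ C₂) 0 * |ξ-x|^4 := by
          have h4 : (ξ-x)^4 = |ξ-x|^4 := by
            rw [abs_of_nonneg (by linarith)]
          rw [← h4]
          exact mul_le_mul_of_nonneg_right
            ((le_max_left C₁ C₂).trans (le_max_left _ _)) (by positivity)
  · have hmem : 2*x - ξ ∈ Icc x (x+r) := ⟨by linarith, by linarith [hξ.1]⟩
    have hb := hC₂ (2*x - ξ) hmem
    rw [hTg (2*x - ξ)] at hb
    have hgval : g (2*x - ξ) = h ξ := by rw [hg_def]; norm_num
    rw [hgval] at hb
    have heq : h x - iteratedDeriv 1 h x * (2*x - ξ - x) +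
        iteratedDeriv 2 h x / 2 * (2*x - ξ - x)^2 -
        iteratedDeriv 3 h x / 6 * (2*x - ξ - x)^3 = P := by
      rw [hP_def]; ring
    rw [heq] at hb
    calc |h ξ - P| ≤ C₂ * (2*x - ξ - x)^4 := by simpa only [Real.norm_eq_abs] using hb
      _ ≤ max (max C₁ C₂) 0 * |ξ-x|^4 := by
          have h4 : (2*x - ξ - x)^4 = |ξ-x|^4 := by
            rw [abs_of_nonpos (by linarith)]; ring
          rw [h4]
          exact mul_le_mul_of_nonneg_right
            ((le_max_right C₁ C₂).trans (le_max_left _ _)) (by positivity)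

theorem stmt_8 (h : ℝ → ℝ) (x : ℝ) (hh : ContDiffAt ℝ 4 h x) (hx : h x ≠ 0) :
    ∃ C > 0, ∃ d₀ > 0, ∀ d : ℝ, 0 < d → d < d₀ →
      |(1 / 2 + (1 / 4) * (-(1 / 3) * iteratedDeriv 2 h x / h x) * d ^ 2)
            * ((1 / d) * (∫ ξ in (x - d)..x, h ξ) + (1 / d) * ∫ ξ in x..(x + d), h ξ)
          - h x|
        ≤ C * d ^ 4 := by
  obtain ⟨C, hC0, r, hr, hcd, hTay⟩ := taylorBound h x hh
  set D0 := h x with hD0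
  set D1 := iteratedDeriv 1 h x with hD1
  set D2 := iteratedDeriv 2 h x with hD2
  set D3 := iteratedDeriv 3 h x with hD3
  set c : ℝ := (1 / 4) * (-(1 / 3) * D2 / D0) with hc_def
  set P : ℝ → ℝ := fun ξ => D0 + D1*(ξ-x) + D2/2*(ξ-x)^2 + D3/6*(ξ-x)^3 with hPdef
  refine ⟨|D2^2 / D0| / 36 + (1/2 + |c|) * (2*C) + 1, by positivity, min r 1,
    lt_min hr one_pos, ?_⟩
  intro d hd hdlt
  have hdr : d < r := lt_of_lt_of_le hdlt (min_le_left _ _)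
  have hd1 : d < 1 := lt_of_lt_of_le hdlt (min_le_right _ _)
  have hIccd : Icc (x-d) (x+d) ⊆ Icc (x-r) (x+r) :=
    Icc_subset_Icc (by linarith) (by linarith)
  have hcont : ContinuousOn h (Icc (x-r) (x+r)) := hcd.continuousOn
  have int1 : IntervalIntegrable h MeasureTheory.volume (x-d) x := by
    apply ContinuousOn.intervalIntegrable
    rw [uIcc_of_le (by linarith)]
    exact hcont.mono (Icc_subset_Icc (by linarith) (by linarith))
  have int2 : IntervalIntegrable h MeasureTheory.volume x (x+d) := by
    apply ContinuousOn.intervalIntegrable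
    rw [uIcc_of_le (by linarith)]
    exact hcont.mono (Icc_subset_Icc (by linarith) (by linarith))
  have inth : IntervalIntegrable h MeasureTheory.volume (x-d) (x+d) := int1.trans int2
  have hPc : Continuous P := by rw [hPdef]; fun_prop
  have intP : IntervalIntegrable P MeasureTheory.volume (x-d) (x+d) :=
    hPc.intervalIntegrable _ _
  have hsplit : (∫ ξ in (x-d)..x, h ξ) + (∫ ξ in x..(x+d), h ξ)
      = ∫ ξ in (x-d)..(x+d), h ξ :=
    intervalIntegral.integral_add_adjacent_intervals int1 int2
  -- integral of P
  have hPint : (∫ ξ in (x-d)..(x+d), P ξ) = 2*D0*d + D2/3*d^3 := by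
    have hQ : ∀ ξ ∈ uIcc (x-d) (x+d),
        HasDerivAt (fun ξ => D0*ξ + (D1/2*(ξ-x)^2 + (D2/6*(ξ-x)^3 + D3/24*(ξ-x)^4)))
          (P ξ) ξ := by
      intro ξ _
      have h1 : HasDerivAt (fun ξ : ℝ => ξ - x) 1 ξ := (hasDerivAt_id ξ).sub_const x
      have H := ((hasDerivAt_id ξ).const_mul D0).add
        (((h1.pow 2).const_mul (D1/2)).add
          (((h1.pow 3).const_mul (D2/6)).add ((h1.pow 4).const_mul (D3/24))))
      refine H.congr_deriv ?_
      rw [hPdef]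
      push_cast
      ring
    rw [intervalIntegral.integral_eq_sub_of_hasDerivAt hQ intP]
    ring
  set E : ℝ := ∫ ξ in (x-d)..(x+d), (h ξ - P ξ) with hEdef
  have hhint : (∫ ξ in (x-d)..(x+d), h ξ) = (2*D0*d + D2/3*d^3) + E := by
    rw [hEdef, intervalIntegral.integral_sub inth intP, hPint]; ring
  have hEbound : |E| ≤ C * d^4 * (2*d) := by
    have := intervalIntegral.norm_integral_le_of_norm_le_const
      (C := C * d^4) (f := fun ξ => h ξ - P ξ) (a := x-d) (b := x+d) ?_
    · calc |E| ≤ C*d^4 * |(x+d) - (x-d)| := this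
        _ = C * d^4 * (2*d) := by rw [abs_of_nonneg (by linarith)]; ring
    · intro ξ hξ
      rw [uIoc_of_le (by linarith : x-d ≤ x+d)] at hξ
      have hmem : ξ ∈ Icc (x-r) (x+r) := ⟨by linarith [hξ.1], by linarith [hξ.2]⟩
      have hb := hTay ξ hmem
      have habs : |ξ - x| ≤ d := abs_le.mpr ⟨by linarith [hξ.1], by linarith [hξ.2]⟩
      have h4 : |ξ-x|^4 ≤ d^4 := by
        apply pow_le_pow_left₀ (abs_nonneg _) habs
      calc ‖h ξ - P ξ‖ = |h ξ - P ξ| := rfl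
        _ ≤ C * |ξ-x|^4 := by
            simpa only [hPdef] using hb
        _ ≤ C * d^4 := mul_le_mul_of_nonneg_left h4 hC0
  -- algebraic main term
  have hdne : d ≠ 0 := ne_of_gt hd
  have hrw : (1/d) * (∫ ξ in (x-d)..x, h ξ) + (1/d) * (∫ ξ in x..(x+d), h ξ)
      = (1/d)*(2*D0*d + D2/3*d^3) + (1/d)*E := by
    rw [← mul_add, hsplit, hhint, mul_add]
  have hmain : (1/2 + c*d^2) * ((1/d)*(2*D0*d + D2/3*d^3)) - D0
      = (-(1/36)*D2^2/D0)*d^4 := by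
    rw [hc_def]
    field_simp
    ring
  have key : (1/2 + c*d^2) * ((1/d)*(2*D0*d + D2/3*d^3) + (1/d)*E) - D0
      = (-(1/36)*D2^2/D0)*d^4 + (1/2 + c*d^2)*((1/d)*E) := by
    rw [← hmain]; ring
  rw [hrw, key]
  have t1 : |(-(1/36)*D2^2/D0)*d^4| ≤ |D2^2/D0|/36 * d^4 := by
    rw [abs_mul, abs_of_nonneg (by positivity : (0:ℝ) ≤ d^4)]
    apply mul_le_mul_of_nonneg_right _ (by positivity)
    rw [show (-(1/36)*D2^2/D0 : ℝ) = (-(1/36)) * (D2^2/D0) by ring, abs_mul]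
    rw [show |(-(1/36) : ℝ)| = 1/36 by norm_num]
    linarith [abs_nonneg (D2^2/D0)]
  have t2 : |(1/2 + c*d^2)*((1/d)*E)| ≤ (1/2 + |c|) * (2*C) * d^4 := by
    rw [abs_mul]
    have h1 : |1/2 + c*d^2| ≤ 1/2 + |c| := by
      refine (abs_add_le _ _).trans ?_
      have h2 : |c*d^2| ≤ |c| := by
        rw [abs_mul, abs_of_nonneg (by positivity : (0:ℝ) ≤ d^2)]
        exact mul_le_of_le_one_right (abs_nonneg c) (by nlinarith)
      rw [show |(1/2 : ℝ)| = 1/2 by norm_num]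
      linarith
    have h3 : |(1/d)*E| ≤ 2*C*d^4 := by
      rw [abs_mul, abs_of_nonneg (by positivity : (0:ℝ) ≤ 1/d)]
      calc (1/d)*|E| ≤ (1/d)*(C*d^4*(2*d)) :=
            mul_le_mul_of_nonneg_left hEbound (by positivity)
        _ = 2*C*d^4 := by field_simp
    calc |1/2 + c*d^2| * |(1/d)*E| ≤ (1/2+|c|) * (2*C*d^4) :=
          mul_le_mul h1 h3 (abs_nonneg _) (by positivity)
      _ = (1/2+|c|)*(2*C)*d^4 := by ring
  calc |(-(1/36)*D2^2/D0)*d^4 + (1/2 + c*d^2)*((1/d)*E)|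
      ≤ |(-(1/36)*D2^2/D0)*d^4| + |(1/2 + c*d^2)*((1/d)*E)| := abs_add_le _ _
    _ ≤ |D2^2/D0|/36 * d^4 + (1/2 + |c|) * (2*C) * d^4 := add_le_add t1 t2
    _ = (|D2^2/D0|/36 + (1/2 + |c|) * (2*C)) * d^4 := by ring
    _ ≤ (|D2^2 / D0| / 36 + (1/2 + |c|) * (2*C) + 1) * d^4 :=
        mul_le_mul_of_nonneg_right (by linarith) (by positivity)
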